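/- Let W be the subgroup of GL(F̂) generated by the reflections s_{α_0}, s_{α_1}, …, s_{α_l}. Then the set of real roots Δ^{re} = W·{α_0,…,α_l} equals the disjoint union Δ_s ∪ Δ_m ∪ Δ_l, where Δ_s = {±ε_i + rδ : 1 ≤ i ≤ l, r ∈ ℤ}, Δ_m = {±ε_i ± ε_j + rδ : 1 ≤ i < j ≤ l, r ∈ ℤ}, and Δ_l = {±2ε_i + (2r+1)δ : 1 ≤ i ≤ l, r ∈ ℤ}. -/

import Mathlib

open scoped BigOperators
open Finset

noncomputable section

/-- `F̂ = ℝ^l ⊕ ℝδ ⊕ ℝγ`, a vector `(x, d, g)` represents `x + d·δ + g·γ`. -/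
abbrev Fhat (l : ℕ) := (Fin l → ℝ) × ℝ × ℝ

/-- The bilinear form `Î` on `F̂`. -/
def Ihat {l : ℕ} (u v : Fhat l) : ℝ :=
  (∑ i, u.1 i * v.1 i) + u.2.1 * v.2.2 + u.2.2 * v.2.1

/-- The isotropic vector `δ`. -/
def deltaV (l : ℕ) : Fhat l := (0, 1, 0)

/-- The isotropic vector `γ`. -/
def gammaV (l : ℕ) : Fhat l := (0, 0, 1)

/-- The standard basis vector `ε_n` (1-based index `n`, for `1 ≤ n ≤ l`). -/
def eps (l : ℕ) (n : ℕ) : Fhat l := (fun j => if (j : ℕ) = n - 1 then 1 else 0, 0, 0)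

/-- The translation `t_μ` associated to `μ ∈ F`. -/
def tmu {l : ℕ} (μ u : Fhat l) : Fhat l :=
  u + Ihat u (deltaV l) • μ
    - (Ihat u μ + (1/2) * Ihat μ μ * Ihat u (deltaV l)) • deltaV l

/-- The reflection `s_β` for a non-isotropic `β`. -/
def sref {l : ℕ} (β u : Fhat l) : Fhat l := u - (2 * Ihat u β / Ihat β β) • β

/-- The simple roots `α_0 = δ − 2ε_1`, `α_i = ε_i − ε_{i+1}` (`1 ≤ i ≤ l−1`),
`α_l = ε_l` of type `BC_l^{(2)}`. -/
def simpleRoot (l : ℕ) (i : ℕ) : Fhat l :=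
  if i = 0 then deltaV l - (2 : ℝ) • eps l 1
  else if i = l then eps l l
  else eps l i - eps l (i + 1)

/-- The orbit `Δ^{re} = W·Π` of the simple roots under the group `W` generated by
the simple reflections (which are involutions, so the orbit is the closure of `Π`
under the generating reflections). -/
inductive IsRealRoot (l : ℕ) : Fhat l → Prop
  | simple (i : ℕ) (hi : i ≤ l) : IsRealRoot l (simpleRoot l i)
  | refl (i : ℕ) (hi : i ≤ l) (v : Fhat l) :
      IsRealRoot l v → IsRealRoot l (sref (simpleRoot l i) v)

/-- `Δ_s = {±ε_i + rδ : 1 ≤ i ≤ l, r ∈ ℤ}`. -/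
def DeltaS (l : ℕ) : Set (Fhat l) :=
  {v | ∃ i : ℕ, 1 ≤ i ∧ i ≤ l ∧ ∃ (r : ℤ) (s : ℤˣ),
    v = ((s : ℤ) : ℝ) • eps l i + ((r : ℤ) : ℝ) • deltaV l}

/-- `Δ_m = {±ε_i ± ε_j + rδ : 1 ≤ i < j ≤ l, r ∈ ℤ}`. -/
def DeltaM (l : ℕ) : Set (Fhat l) :=
  {v | ∃ i j : ℕ, 1 ≤ i ∧ i < j ∧ j ≤ l ∧ ∃ (r : ℤ) (s s' : ℤˣ),
    v = ((s : ℤ) : ℝ) • eps l i + ((s' : ℤ) : ℝ) • eps l j + ((r : ℤ) : ℝ) • deltaV l}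

/-- `Δ_l = {±2ε_i + (2r+1)δ : 1 ≤ i ≤ l, r ∈ ℤ}`. -/
def DeltaL (l : ℕ) : Set (Fhat l) :=
  {v | ∃ i : ℕ, 1 ≤ i ∧ i ≤ l ∧ ∃ (r : ℤ) (s : ℤˣ),
    v = ((2 * s : ℤ) : ℝ) • eps l i + ((2 * r + 1 : ℤ) : ℝ) • deltaV l}

section Helpers

variable {l : ℕ}

/-- integer vector representation -/
def vec (y : Fin l → ℤ) (d : ℤ) : Fhat l := (fun j => (y j : ℝ), ((d : ℝ), 0))

/-- signed indicator -/
def sing (i : Fin l) (a : ℤ) : Fin l → ℤ := fun j => if j = i then a else 0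

lemma Ihat_vec_vec (y z : Fin l → ℤ) (d e : ℤ) :
    Ihat (vec y d) (vec z e) = ((∑ i, y i * z i : ℤ) : ℝ) := by
  simp [Ihat, vec]

lemma Ihat_sub_smul_left (u w β : Fhat l) (c : ℝ) :
    Ihat (u - c • w) β = Ihat u β - c * Ihat w β := by
  have h1 : ∀ i, (u - c • w).1 i = u.1 i - c * w.1 i := fun i => rfl
  have h2 : (u - c • w).2.1 = u.2.1 - c * w.2.1 := rfl
  have h3 : (u - c • w).2.2 = u.2.2 - c * w.2.2 := rfl
  simp only [Ihat, h1, h2, h3, sub_mul, Finset.sum_sub_distrib, mul_assoc, ← Finset.mul_sum]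
  ring

lemma Ihat_comm (u v : Fhat l) : Ihat u v = Ihat v u := by
  simp only [Ihat, mul_comm]
  ring

lemma Ihat_sub_smul_right (u w β : Fhat l) (c : ℝ) :
    Ihat β (u - c • w) = Ihat β u - c * Ihat β w := by
  rw [Ihat_comm, Ihat_sub_smul_left, Ihat_comm u β, Ihat_comm w β]

lemma sref_sub_smul (β u w : Fhat l) (c : ℝ) :
    sref β (u - c • w) = sref β u - c • sref β w := by
  simp only [sref, Ihat_sub_smul_left]
  module

lemma Ihat_self_sref (β u v : Fhat l) :
    Ihat (sref β u) (sref β v) = Ihat u v := by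
  by_cases hβ : Ihat β β = 0
  · simp [sref, hβ]
  · simp only [sref, Ihat_sub_smul_left, Ihat_sub_smul_right]
    field_simp
    rw [Ihat_comm β v]
    ring

lemma sref_sref (β u : Fhat l) (hβ : Ihat β β ≠ 0) : sref β (sref β u) = u := by
  simp only [sref, Ihat_sub_smul_left]
  rw [div_mul_cancel₀ _ hβ]
  module

lemma sref_conj (α β v : Fhat l) (hα : Ihat α α ≠ 0) :
    sref (sref α β) v = sref α (sref β (sref α v)) := by
  have hd : Ihat (sref α β) (sref α β) = Ihat β β := Ihat_self_sref α β β
  have hn : Ihat v (sref α β) = Ihat (sref α v) β := by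
    rw [← Ihat_self_sref α v (sref α β), sref_sref α β hα]
  rw [show sref (sref α β) v
      = v - (2 * Ihat v (sref α β) / Ihat (sref α β) (sref α β)) • sref α β from rfl, hd, hn]
  conv_rhs => rw [show sref β (sref α v)
      = sref α v - (2 * Ihat (sref α v) β / Ihat β β) • β from rfl]
  rw [sref_sub_smul, sref_sref α v hα]

end Helpers
section Part2

variable {l : ℕ}

lemma Fhat.ext {u v : Fhat l} (h1 : ∀ j, u.1 j = v.1 j) (h2 : u.2.1 = v.2.1)
    (h3 : u.2.2 = v.2.2) : u = v := by
  rw [Prod.ext_iff, Prod.ext_iff]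
  exact ⟨funext h1, h2, h3⟩

lemma sum_sing_mul (i : Fin l) (a : ℤ) (f : Fin l → ℤ) :
    ∑ j, (sing i a j) * f j = a * f i := by
  simp [sing, ite_mul]

lemma sum_mul_sing (i : Fin l) (a : ℤ) (f : Fin l → ℤ) :
    ∑ j, f j * (sing i a j) = f i * a := by
  simp [sing, mul_ite]

lemma sing_apply_self (i : Fin l) (a : ℤ) : sing i a i = a := by simp [sing]

lemma sing_apply_ne (i j : Fin l) (a : ℤ) (h : j ≠ i) : sing i a j = 0 := by
  simp [sing, h]

lemma vec_sub_vec (y z : Fin l → ℤ) (d e : ℤ) :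
    vec y d - vec z e = vec (y - z) (d - e) := by
  apply Fhat.ext
  · intro j
    show ((y j : ℤ):ℝ) - ((z j : ℤ):ℝ) = (((y - z) j : ℤ):ℝ)
    push_cast [Pi.sub_apply]; ring
  · show ((d:ℤ):ℝ) - ((e:ℤ):ℝ) = ((d - e : ℤ):ℝ); push_cast; ring
  · show (0:ℝ) - 0 = (0:ℝ); ring

lemma intCast_smul_vec (c : ℤ) (y : Fin l → ℤ) (d : ℤ) :
    (c:ℝ) • vec y d = vec (c • y) (c * d) := by
  apply Fhat.ext
  · intro j
    show (c:ℝ) * ((y j : ℤ):ℝ) = (((c • y) j : ℤ):ℝ)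
    push_cast [Pi.smul_apply, smul_eq_mul]; ring
  · show (c:ℝ) * ((d:ℤ):ℝ) = ((c * d : ℤ):ℝ); push_cast; ring
  · show (c:ℝ) * 0 = (0:ℝ); ring

lemma eps_eq_vec (n : ℕ) (i : Fin l) (h : (i:ℕ) = n - 1) : eps l n = vec (sing i 1) 0 := by
  apply Fhat.ext
  · intro j
    show (if (j:ℕ) = n-1 then (1:ℝ) else 0) = ((sing i 1 j : ℤ):ℝ)
    by_cases hj : (j:ℕ) = n - 1
    · have hji : j = i := Fin.ext (by omega)
      simp [sing, hj, hji, h]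
    · have hji : j ≠ i := fun hc => hj (by rw [hc, h])
      simp [sing, hj, hji]
  · show (0:ℝ) = ((0:ℤ):ℝ); norm_num
  · rfl

lemma deltaV_eq_vec : deltaV l = vec 0 1 := by
  apply Fhat.ext
  · intro j; show (0:ℝ) = ((0:ℤ):ℝ); norm_num
  · show (1:ℝ) = ((1:ℤ):ℝ); norm_num
  · rfl

lemma simpleRoot_zero (p : Fin l) (hp : (p:ℕ) = 0) :
    simpleRoot l 0 = vec (sing p (-2)) 1 := by
  rw [simpleRoot, if_pos rfl, deltaV_eq_vec, eps_eq_vec 1 p (by omega),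
    show (2:ℝ) = ((2:ℤ):ℝ) by norm_num, intCast_smul_vec, vec_sub_vec]
  rw [show ((0:Fin l → ℤ) - (2:ℤ) • sing p 1) = sing p (-2) by
      funext j
      by_cases hj : j = p <;> simp [sing, hj],
    show (1:ℤ) - 2 * 0 = 1 by norm_num]

lemma simpleRoot_last (hl : 0 < l) (p : Fin l) (hp : (p:ℕ) = l - 1) :
    simpleRoot l l = vec (sing p 1) 0 := by
  rw [simpleRoot, if_neg (by omega), if_pos rfl, eps_eq_vec l p (by omega)]

lemma simpleRoot_mid (i : ℕ) (h1 : 1 ≤ i) (h2 : i < l) (p q : Fin l)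
    (hp : (p:ℕ) = i - 1) (hq : (q:ℕ) = i) :
    simpleRoot l i = vec (sing p 1 - sing q 1) 0 := by
  rw [simpleRoot, if_neg (by omega), if_neg (by omega), eps_eq_vec i p (by omega),
    eps_eq_vec (i+1) q (by omega), vec_sub_vec, show (0:ℤ) - 0 = 0 by norm_num]

lemma sum_sing_sub_sq (p q : Fin l) (h : p ≠ q) (a b : ℤ) :
    ∑ j, ((sing p a - sing q b) j * (sing p a - sing q b) j) = a*a + b*b := by
  have e1 : sing q b p = 0 := sing_apply_ne _ _ _ h
  have e2 : sing p a q = 0 := sing_apply_ne _ _ _ h.symm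
  simp only [Pi.sub_apply, sub_mul, mul_sub, Finset.sum_sub_distrib,
    sum_sing_mul, sum_mul_sing, sing_apply_self, e1, e2]
  ring

lemma sum_sing_sq (p : Fin l) (a : ℤ) : ∑ j, (sing p a j * sing p a j) = a * a := by
  rw [sum_sing_mul, sing_apply_self]

lemma sref_vec (y z : Fin l → ℤ) (d e c : ℤ) (hz : (∑ i, z i * z i) ≠ 0)
    (hc : 2 * (∑ i, y i * z i) = c * (∑ i, z i * z i)) :
    sref (vec z e) (vec y d) = vec (y - c • z) (d - c * e) := by
  rw [sref, Ihat_vec_vec, Ihat_vec_vec]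
  have hco : (2 * ((∑ i, y i * z i : ℤ):ℝ)) / ((∑ i, z i * z i : ℤ):ℝ) = (c:ℝ) := by
    rw [div_eq_iff (by exact_mod_cast hz)]
    exact_mod_cast hc
  rw [hco, intCast_smul_vec, vec_sub_vec]

lemma Ihat_simpleRoot_ne (hl : 0 < l) (i : ℕ) (hi : i ≤ l) :
    Ihat (simpleRoot l i) (simpleRoot l i) ≠ 0 := by
  rcases Nat.eq_zero_or_pos i with h0 | h1
  · subst h0
    rw [simpleRoot_zero ⟨0, hl⟩ rfl, Ihat_vec_vec, sum_sing_sq]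
    norm_num
  · rcases eq_or_lt_of_le hi with hel | hlt
    · rw [hel, simpleRoot_last hl ⟨l-1, by omega⟩ rfl, Ihat_vec_vec, sum_sing_sq]
      norm_num
    · have hpq : (⟨i-1, by omega⟩ : Fin l) ≠ ⟨i, hlt⟩ := by
        simp only [ne_eq, Fin.mk.injEq]; omega
      rw [simpleRoot_mid i h1 hlt ⟨i-1, by omega⟩ ⟨i, hlt⟩ rfl rfl, Ihat_vec_vec,
        sum_sing_sub_sq _ _ hpq]
      norm_num

theorem isRealRoot_sref (hl : 0 < l) {β : Fhat l} (hβ : IsRealRoot l β) :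
    ∀ v, IsRealRoot l v → IsRealRoot l (sref β v) := by
  induction hβ with
  | simple i hi => exact fun v hv => IsRealRoot.refl i hi v hv
  | refl i hi β' hβ' ih =>
    intro v hv
    have h1 : IsRealRoot l (sref (simpleRoot l i) v) := .refl i hi v hv
    have h2 := ih _ h1
    have h3 : IsRealRoot l (sref (simpleRoot l i) (sref β' (sref (simpleRoot l i) v))) :=
      .refl i hi _ h2
    rwa [← sref_conj _ _ _ (Ihat_simpleRoot_ne hl i hi)] at h3

end Part2
section Part3

variable {l : ℕ}

lemma sum_mul_sing_sub (y : Fin l → ℤ) (p q : Fin l) :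
    ∑ j, y j * (sing p 1 - sing q 1) j = y p - y q := by
  simp only [Pi.sub_apply, mul_sub, Finset.sum_sub_distrib, sum_mul_sing, mul_one]

lemma reflect_root (hl : 0 < l) {z y : Fin l → ℤ} {e d c : ℤ}
    (hz : IsRealRoot l (vec z e)) (hzz : (∑ i, z i * z i) ≠ 0)
    (hc : 2 * (∑ i, y i * z i) = c * (∑ i, z i * z i))
    (h : IsRealRoot l (vec y d)) : IsRealRoot l (vec (y - c • z) (d - c * e)) := by
  have := isRealRoot_sref hl hz _ h
  rwa [sref_vec y z d e c hzz hc] at this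

lemma root_eps (hl : 0 < l) (p : Fin l) : IsRealRoot l (vec (sing p 1) 0) := by
  suffices H : ∀ k : ℕ, ∀ p : Fin l, (p:ℕ) + k = l - 1 → IsRealRoot l (vec (sing p 1) 0) by
    exact H (l - 1 - (p:ℕ)) p (by have := p.isLt; omega)
  intro k
  induction k with
  | zero =>
    intro p hp
    rw [← simpleRoot_last hl p (by omega)]
    exact .simple l le_rfl
  | succ k ih =>
    intro p hp
    have hql : (p:ℕ)+1 < l := by have := p.isLt; omega
    set q : Fin l := ⟨(p:ℕ)+1, hql⟩ with hqdef
    have hqv : (q:ℕ) = (p:ℕ)+1 := rfl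
    have hQ := ih q (by omega)
    have hz : IsRealRoot l (vec (sing p 1 - sing q 1) 0) := by
      rw [← simpleRoot_mid ((p:ℕ)+1) (by omega) hql p q (by omega) rfl]
      exact .simple _ (by omega)
    have hpq : p ≠ q := Fin.ne_of_val_ne (by omega)
    have hyz : ∑ j, (sing q 1 j) * (sing p 1 - sing q 1) j = -1 := by
      rw [sum_mul_sing_sub, sing_apply_self, sing_apply_ne q p 1 hpq]
      ring
    have hres := reflect_root hl hz
      (by rw [sum_sing_sub_sq p q hpq]; norm_num)
      (c := -1) (by rw [hyz, sum_sing_sub_sq p q hpq]; ring) hQ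
    rwa [show sing q 1 - (-1 : ℤ) • (sing p 1 - sing q 1) = sing p 1 from by
        rw [neg_smul, one_smul, sub_neg_eq_add]; abel,
      show (0:ℤ) - (-1) * 0 = 0 from by ring] at hres

lemma root_diff (hl : 0 < l) (p q : Fin l) (hpq : p < q) :
    IsRealRoot l (vec (sing p 1 - sing q 1) 0) := by
  suffices H : ∀ k : ℕ, ∀ q : Fin l, (q:ℕ) = (p:ℕ) + 1 + k →
      IsRealRoot l (vec (sing p 1 - sing q 1) 0) by
    exact H ((q:ℕ) - (p:ℕ) - 1) q (by have := Fin.lt_def.mp hpq; omega)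
  intro k
  induction k with
  | zero =>
    intro q hq
    rw [← simpleRoot_mid ((p:ℕ)+1) (by omega) (by have := q.isLt; omega) p q (by omega) (by omega)]
    exact .simple _ (by have := q.isLt; omega)
  | succ k ih =>
    intro q hq
    have hml : (p:ℕ)+1+k < l := by have := q.isLt; omega
    set m : Fin l := ⟨(p:ℕ)+1+k, hml⟩ with hmdef
    have hmv : (m:ℕ) = (p:ℕ)+1+k := rfl
    have hM := ih m hmv
    have hz : IsRealRoot l (vec (sing m 1 - sing q 1) 0) := by
      rw [← simpleRoot_mid ((m:ℕ)+1) (by omega) (by omega) m q (by omega) (by omega)]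
      exact .simple _ (by omega)
    have hmq : m ≠ q := Fin.ne_of_val_ne (by omega)
    have hpm : p ≠ m := Fin.ne_of_val_ne (by omega)
    have hpq' : p ≠ q := Fin.ne_of_val_ne (by omega)
    have hyz : ∑ j, ((sing p 1 - sing m 1) j) * (sing m 1 - sing q 1) j = -1 := by
      rw [sum_mul_sing_sub]
      simp only [Pi.sub_apply, sing_apply_self, sing_apply_ne p m 1 hpm.symm,
        sing_apply_ne p q 1 hpq'.symm, sing_apply_ne m q 1 hmq.symm]
      ring
    have hres := reflect_root hl hz
      (by rw [sum_sing_sub_sq m q hmq]; norm_num)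
      (c := -1) (by rw [hyz, sum_sing_sub_sq m q hmq]; ring) hM
    rwa [show (sing p 1 - sing m 1) - (-1 : ℤ) • (sing m 1 - sing q 1)
          = sing p 1 - sing q 1 from by rw [neg_smul, one_smul, sub_neg_eq_add]; abel,
      show (0:ℤ) - (-1) * 0 = 0 from by ring] at hres

lemma flip_move (hl : 0 < l) (p : Fin l) {y : Fin l → ℤ} {d : ℤ}
    (h : IsRealRoot l (vec y d)) :
    IsRealRoot l (vec (y - (2 * y p) • sing p 1) d) := by
  have hres := reflect_root hl (root_eps hl p)
    (by rw [sum_sing_sq]; norm_num)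
    (c := 2 * y p) (by rw [sum_mul_sing, sum_sing_sq]; ring) h
  rwa [show d - (2 * y p) * 0 = d from by ring] at hres

lemma alpha0_move (hl : 0 < l) {y : Fin l → ℤ} {d : ℤ}
    (h : IsRealRoot l (vec y d)) :
    IsRealRoot l (vec (y + (y ⟨0,hl⟩) • sing ⟨0,hl⟩ (-2)) (d + y ⟨0,hl⟩)) := by
  have hz : IsRealRoot l (vec (sing ⟨0,hl⟩ (-2)) 1) := by
    rw [← simpleRoot_zero ⟨0,hl⟩ rfl]
    exact .simple 0 (by omega)
  have hres := reflect_root hl hz (by rw [sum_sing_sq]; norm_num)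
    (c := -(y ⟨0,hl⟩)) (by rw [sum_mul_sing, sum_sing_sq]; ring) h
  rwa [show y - (-(y ⟨0,hl⟩)) • sing ⟨0,hl⟩ (-2) = y + (y ⟨0,hl⟩) • sing ⟨0,hl⟩ (-2) from by
      rw [neg_smul, sub_neg_eq_add],
    show d - (-(y ⟨0,hl⟩)) * 1 = d + y ⟨0,hl⟩ from by ring] at hres

lemma transport_move (hl : 0 < l) (p q : Fin l) (hpq : p < q) {y : Fin l → ℤ} {d : ℤ}
    (h : IsRealRoot l (vec y d)) :
    IsRealRoot l (vec (y - (y p - y q) • (sing p 1 - sing q 1)) d) := by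
  have hpq' : p ≠ q := Fin.ne_of_lt hpq
  have hres := reflect_root hl (root_diff hl p q hpq)
    (by rw [sum_sing_sub_sq p q hpq']; norm_num)
    (c := y p - y q) (by rw [sum_mul_sing_sub, sum_sing_sub_sq p q hpq']; ring) h
  rwa [show d - (y p - y q) * 0 = d from by ring] at hres

end Part3
section Part4

variable {l : ℕ}

lemma flip_sing (hl : 0 < l) (p : Fin l) (a r : ℤ)
    (h : IsRealRoot l (vec (sing p a) r)) : IsRealRoot l (vec (sing p (-a)) r) := by
  have hm := flip_move hl p h
  rw [sing_apply_self] at hm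
  rwa [show sing p a - (2*a) • sing p 1 = sing p (-a) from by
    funext j; simp only [Pi.sub_apply, Pi.smul_apply, smul_eq_mul, sing]
    split_ifs <;> ring] at hm

lemma rootS (hl : 0 < l) (p : Fin l) (s : ℤ) (hs : s = 1 ∨ s = -1) (r : ℤ) :
    IsRealRoot l (vec (sing p s) r) := by
  set p0 : Fin l := ⟨0, hl⟩ with hp0def
  have hp0v : (p0:ℕ) = 0 := rfl
  have key : ∀ r : ℤ, IsRealRoot l (vec (sing p0 1) r) := by
    intro r
    induction r using Int.induction_on with
    | zero => exact root_eps hl p0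
    | succ i ih =>
      have h2 := alpha0_move hl ih
      rw [sing_apply_self, one_smul] at h2
      have h3 : IsRealRoot l (vec (sing p0 (-1)) ((i:ℤ) + 1)) := by
        rwa [show sing p0 1 + sing p0 (-2) = sing p0 (-1) from by
          funext j; simp only [Pi.add_apply, sing]; split_ifs <;> ring] at h2
      have h4 := flip_sing hl p0 (-1) _ h3
      rwa [neg_neg] at h4
    | pred i ih =>
      have h1 := flip_sing hl p0 1 _ ih
      have h2 := alpha0_move hl h1
      rw [sing_apply_self] at h2
      have h3 : IsRealRoot l (vec (sing p0 1) (-(i:ℤ) + -1)) := by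
        rwa [show sing p0 (-1) + (-1 : ℤ) • sing p0 (-2) = sing p0 1 from by
          funext j; simp only [Pi.add_apply, Pi.smul_apply, smul_eq_mul, sing]
          split_ifs <;> ring] at h2
      rwa [show (-(i:ℤ) + -1) = (-(i:ℤ) - 1) from by ring] at h3
  have keyS : ∀ (a : ℤ), a = 1 ∨ a = -1 → ∀ r : ℤ, IsRealRoot l (vec (sing p0 a) r) := by
    rintro a (rfl | rfl) r
    · exact key r
    · exact flip_sing hl p0 1 r (key r)
  by_cases hpp : p = p0
  · rw [hpp]; exact keyS s hs r
  · have hpv : (p:ℕ) ≠ 0 := fun hc => hpp (Fin.ext (by rw [hc, hp0v]))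
    have hlt : p0 < p := Fin.lt_def.mpr (by omega)
    have h := transport_move hl p0 p hlt (keyS s hs r)
    rw [sing_apply_self, sing_apply_ne p0 p s hpp, show s - 0 = s from by ring] at h
    rwa [show sing p0 s - s • (sing p0 1 - sing p 1) = sing p s from by
      funext j; simp only [Pi.sub_apply, Pi.smul_apply, smul_eq_mul, sing]
      split_ifs <;> ring] at h

lemma rootM (hl : 0 < l) (p q : Fin l) (hpq : p < q) (a b : ℤ)
    (ha : a = 1 ∨ a = -1) (hb : b = 1 ∨ b = -1) (r : ℤ) :
    IsRealRoot l (vec (sing p a + sing q b) r) := by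
  set p0 : Fin l := ⟨0, hl⟩ with hp0def
  have hp0v : (p0:ℕ) = 0 := rfl
  have hpqv := Fin.lt_def.mp hpq
  have hq0 : p0 < q := Fin.lt_def.mpr (by omega)
  have hne0q : p0 ≠ q := Fin.ne_of_lt hq0
  have hcoef : ∀ a b : ℤ, (sing p0 a + sing q b) p0 = a := by
    intro a b
    rw [Pi.add_apply, sing_apply_self, sing_apply_ne q p0 b hne0q, add_zero]
  have hcoefq : ∀ a b : ℤ, (sing p0 a + sing q b) q = b := by
    intro a b
    rw [Pi.add_apply, sing_apply_self, sing_apply_ne p0 q a hne0q.symm, zero_add]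
  have flipP : ∀ (a b r : ℤ), IsRealRoot l (vec (sing p0 a + sing q b) r) →
      IsRealRoot l (vec (sing p0 (-a) + sing q b) r) := by
    intro a b r h
    have hm := flip_move hl p0 h
    rw [hcoef] at hm
    rwa [show (sing p0 a + sing q b) - (2*a) • sing p0 1 = sing p0 (-a) + sing q b from by
      funext j; simp only [Pi.add_apply, Pi.sub_apply, Pi.smul_apply, smul_eq_mul, sing]
      split_ifs <;> ring] at hm
  have flipQ : ∀ (a b r : ℤ), IsRealRoot l (vec (sing p0 a + sing q b) r) →
      IsRealRoot l (vec (sing p0 a + sing q (-b)) r) := by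
    intro a b r h
    have hm := flip_move hl q h
    rw [hcoefq] at hm
    rwa [show (sing p0 a + sing q b) - (2*b) • sing q 1 = sing p0 a + sing q (-b) from by
      funext j; simp only [Pi.add_apply, Pi.sub_apply, Pi.smul_apply, smul_eq_mul, sing]
      split_ifs <;> ring] at hm
  have key1 : ∀ r : ℤ, IsRealRoot l (vec (sing p0 1 + sing q 1) r) := by
    intro r
    induction r using Int.induction_on with
    | zero =>
      have h0 := root_diff hl p0 q hq0
      have hm := flip_move hl q h0
      rw [show (sing p0 1 - sing q 1) q = -1 from by
        rw [Pi.sub_apply, sing_apply_self, sing_apply_ne p0 q 1 hne0q.symm]; ring] at hm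
      rwa [show (sing p0 1 - sing q 1) - (2*(-1) : ℤ) • sing q 1 = sing p0 1 + sing q 1 from by
        funext j; simp only [Pi.add_apply, Pi.sub_apply, Pi.smul_apply, smul_eq_mul, sing]
        split_ifs <;> ring] at hm
    | succ i ih =>
      have h2 := alpha0_move hl ih
      rw [hcoef, one_smul] at h2
      have h3 : IsRealRoot l (vec (sing p0 (-1) + sing q 1) ((i:ℤ)+1)) := by
        rwa [show (sing p0 1 + sing q 1) + sing p0 (-2) = sing p0 (-1) + sing q 1 from by
          funext j; simp only [Pi.add_apply, sing]; split_ifs <;> ring] at h2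
      have h4 := flipP (-1) 1 _ h3
      rwa [neg_neg] at h4
    | pred i ih =>
      have h1 := flipP 1 1 _ ih
      have h2 := alpha0_move hl h1
      rw [hcoef] at h2
      have h3 : IsRealRoot l (vec (sing p0 1 + sing q 1) (-(i:ℤ) + -1)) := by
        rwa [show (sing p0 (-1) + sing q 1) + (-1:ℤ) • sing p0 (-2) = sing p0 1 + sing q 1 from by
          funext j; simp only [Pi.add_apply, Pi.smul_apply, smul_eq_mul, sing]
          split_ifs <;> ring] at h2
      rwa [show (-(i:ℤ) + -1) = (-(i:ℤ) - 1) from by ring] at h3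
  have keyM : ∀ (a : ℤ), a = 1 ∨ a = -1 → ∀ (b : ℤ), b = 1 ∨ b = -1 → ∀ r : ℤ,
      IsRealRoot l (vec (sing p0 a + sing q b) r) := by
    rintro a (rfl | rfl) b (rfl | rfl) r
    · exact key1 r
    · exact flipQ 1 1 r (key1 r)
    · exact flipP 1 1 r (key1 r)
    · exact flipQ (-1) 1 r (flipP 1 1 r (key1 r))
  have hpq' : p ≠ q := Fin.ne_of_lt hpq
  by_cases hpp : p = p0
  · rw [hpp]; exact keyM a ha b hb r
  · have hpv : (p:ℕ) ≠ 0 := fun hc => hpp (Fin.ext (by rw [hc, hp0v]))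
    have hlt : p0 < p := Fin.lt_def.mpr (by omega)
    have h := transport_move hl p0 p hlt (keyM a ha b hb r)
    rw [hcoef, show (sing p0 a + sing q b) p = 0 from by
      rw [Pi.add_apply, sing_apply_ne p0 p a hpp, sing_apply_ne q p b hpq', add_zero]] at h
    rw [show a - 0 = a from by ring] at h
    rwa [show (sing p0 a + sing q b) - a • (sing p0 1 - sing p 1) = sing p a + sing q b from by
      funext j; simp only [Pi.add_apply, Pi.sub_apply, Pi.smul_apply, smul_eq_mul, sing]
      split_ifs <;> ring] at h

lemma rootL (hl : 0 < l) (p : Fin l) (s : ℤ) (hs : s = 1 ∨ s = -1) (r : ℤ) :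
    IsRealRoot l (vec (sing p (2*s)) (2*r+1)) := by
  set p0 : Fin l := ⟨0, hl⟩ with hp0def
  have hp0v : (p0:ℕ) = 0 := rfl
  have hz0 : IsRealRoot l (vec (sing p0 (-2)) 1) := by
    rw [← simpleRoot_zero p0 rfl]
    exact .simple 0 (by omega)
  have key : ∀ r : ℤ, IsRealRoot l (vec (sing p0 2) (2*r+1)) := by
    intro r
    induction r using Int.induction_on with
    | zero =>
      have h := flip_sing hl p0 (-2) 1 hz0
      rw [neg_neg] at h
      rwa [show (2*(0:ℤ)+1) = 1 from by ring]
    | succ i ih =>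
      have h2 := alpha0_move hl ih
      rw [sing_apply_self] at h2
      have h3 : IsRealRoot l (vec (sing p0 (-2)) (2*(i:ℤ)+1+2)) := by
        rwa [show sing p0 2 + (2:ℤ) • sing p0 (-2) = sing p0 (-2) from by
          funext j; simp only [Pi.add_apply, Pi.smul_apply, smul_eq_mul, sing]
          split_ifs <;> ring] at h2
      have h4 := flip_sing hl p0 (-2) _ h3
      rw [neg_neg] at h4
      rwa [show (2*((i:ℤ)+1)+1) = (2*(i:ℤ)+1+2) from by ring]
    | pred i ih =>
      have h1 := flip_sing hl p0 2 _ ih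
      have h2 := alpha0_move hl h1
      rw [sing_apply_self] at h2
      have h3 : IsRealRoot l (vec (sing p0 2) (2*(-(i:ℤ))+1 + -2)) := by
        rwa [show sing p0 (-2) + (-2:ℤ) • sing p0 (-2) = sing p0 2 from by
          funext j; simp only [Pi.add_apply, Pi.smul_apply, smul_eq_mul, sing]
          split_ifs <;> ring] at h2
      rwa [show (2*(-(i:ℤ)-1)+1) = (2*(-(i:ℤ))+1 + -2) from by ring]
  have keyL : ∀ (s : ℤ), s = 1 ∨ s = -1 → ∀ r : ℤ,
      IsRealRoot l (vec (sing p0 (2*s)) (2*r+1)) := by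
    rintro s (rfl | rfl) r
    · rw [show (2*(1:ℤ)) = 2 from by ring]; exact key r
    · rw [show (2*(-1:ℤ)) = -2 from by ring]
      have := flip_sing hl p0 2 _ (key r)
      rwa [show (-(2:ℤ)) = -2 from rfl] at this
  by_cases hpp : p = p0
  · rw [hpp]; exact keyL s hs r
  · have hpv : (p:ℕ) ≠ 0 := fun hc => hpp (Fin.ext (by rw [hc, hp0v]))
    have hlt : p0 < p := Fin.lt_def.mpr (by omega)
    have h := transport_move hl p0 p hlt (keyL s hs r)
    rw [sing_apply_self, sing_apply_ne p0 p (2*s) hpp, show 2*s - 0 = 2*s from by ring] at h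
    rwa [show sing p0 (2*s) - (2*s) • (sing p0 1 - sing p 1) = sing p (2*s) from by
      funext j; simp only [Pi.sub_apply, Pi.smul_apply, smul_eq_mul, sing]
      split_ifs <;> ring] at h

end Part4
section Part5

variable {l : ℕ}

def GoodV (l : ℕ) (v : Fhat l) : Prop :=
  ∃ (y : Fin l → ℤ) (d : ℤ), v = vec y d ∧
    ((∑ i, y i * y i = 1) ∨ (∑ i, y i * y i = 2) ∨
      (∑ i, y i * y i = 4 ∧ (∀ i, 2 ∣ y i) ∧ Odd d))

lemma sum_sing_add_sq (p q : Fin l) (h : p ≠ q) (a b : ℤ) :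
    ∑ j, ((sing p a + sing q b) j * (sing p a + sing q b) j) = a*a + b*b := by
  have e1 : sing q b p = 0 := sing_apply_ne _ _ _ h
  have e2 : sing p a q = 0 := sing_apply_ne _ _ _ h.symm
  simp only [Pi.add_apply, add_mul, mul_add, Finset.sum_add_distrib,
    sum_sing_mul, sum_mul_sing, sing_apply_self, e1, e2]
  ring

lemma good_of_real (hl : 0 < l) {v : Fhat l} (h : IsRealRoot l v) : GoodV l v := by
  induction h with
  | simple i hi =>
    rcases Nat.eq_zero_or_pos i with h0 | h1
    · subst h0
      refine ⟨sing ⟨0,hl⟩ (-2), 1, by rw [simpleRoot_zero ⟨0,hl⟩ rfl], Or.inr (Or.inr ?_)⟩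
      refine ⟨by rw [sum_sing_sq]; ring, fun j => ?_, ⟨0, by ring⟩⟩
      by_cases hj : j = ⟨0,hl⟩ <;> simp [sing, hj]
    · rcases eq_or_lt_of_le hi with hel | hlt
      · refine ⟨sing ⟨l-1, Nat.sub_lt hl one_pos⟩ 1, 0, by
          rw [hel]; exact simpleRoot_last hl ⟨l-1, Nat.sub_lt hl one_pos⟩ rfl, Or.inl ?_⟩
        rw [sum_sing_sq]; norm_num
      · have hAB : (⟨i-1, lt_of_le_of_lt (Nat.sub_le i 1) hlt⟩ : Fin l) ≠ ⟨i, hlt⟩ :=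
          Fin.ne_of_val_ne (by simp; omega)
        refine ⟨sing ⟨i-1, lt_of_le_of_lt (Nat.sub_le i 1) hlt⟩ 1 - sing ⟨i, hlt⟩ 1, 0,
          by exact simpleRoot_mid i h1 hlt _ ⟨i, hlt⟩ rfl rfl, Or.inr (Or.inl ?_)⟩
        rw [sum_sing_sub_sq _ _ hAB]; norm_num
  | refl i hi v hv ih =>
    obtain ⟨y, d, rfl, hP⟩ := ih
    rcases Nat.eq_zero_or_pos i with h0 | h1
    · subst h0
      set p0 : Fin l := ⟨0, hl⟩ with hp0def
      rw [simpleRoot_zero p0 rfl,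
        sref_vec y (sing p0 (-2)) d 1 (-(y p0)) (by rw [sum_sing_sq]; norm_num)
          (by rw [sum_mul_sing, sum_sing_sq]; ring)]
      refine ⟨_, _, rfl, ?_⟩
      have hsq : ∀ j, (y - (-(y p0)) • sing p0 (-2)) j * (y - (-(y p0)) • sing p0 (-2)) j
          = y j * y j := by
        intro j
        by_cases hj : j = p0 <;> simp [sing, hj] <;> ring
      have hsum : ∑ j, (y - (-(y p0)) • sing p0 (-2)) j * (y - (-(y p0)) • sing p0 (-2)) j
          = ∑ j, y j * y j := Finset.sum_congr rfl (fun j _ => hsq j)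
      rcases hP with h1 | h2 | ⟨h4, hdvd, hodd⟩
      · exact Or.inl (by rw [hsum, h1])
      · exact Or.inr (Or.inl (by rw [hsum, h2]))
      · refine Or.inr (Or.inr ⟨by rw [hsum, h4], fun j => ?_, ?_⟩)
        · have H1 := hdvd j
          have H2 := hdvd p0
          by_cases hj : j = p0 <;> simp [sing, hj] <;> omega
        · have H2 := hdvd p0
          rw [Int.odd_iff] at hodd ⊢
          omega
    · rcases eq_or_lt_of_le hi with hel | hlt
      · set pl : Fin l := ⟨l-1, Nat.sub_lt hl one_pos⟩ with hpldef
        have hsr : simpleRoot l i = vec (sing pl 1) 0 := by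
          rw [hel]; exact simpleRoot_last hl pl rfl
        rw [hsr,
          sref_vec y (sing pl 1) d 0 (2 * y pl) (by rw [sum_sing_sq]; norm_num)
            (by rw [sum_mul_sing, sum_sing_sq]; ring)]
      -- same pointwise-square argument
        refine ⟨_, _, rfl, ?_⟩
        have hsq : ∀ j, (y - (2 * y pl) • sing pl 1) j * (y - (2 * y pl) • sing pl 1) j
            = y j * y j := by
          intro j
          by_cases hj : j = pl <;> simp [sing, hj] <;> ring
        have hsum : ∑ j, (y - (2 * y pl) • sing pl 1) j * (y - (2 * y pl) • sing pl 1) j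
            = ∑ j, y j * y j := Finset.sum_congr rfl (fun j _ => hsq j)
        rcases hP with h1 | h2 | ⟨h4, hdvd, hodd⟩
        · exact Or.inl (by rw [hsum, h1])
        · exact Or.inr (Or.inl (by rw [hsum, h2]))
        · refine Or.inr (Or.inr ⟨by rw [hsum, h4], fun j => ?_, ?_⟩)
          · have H1 := hdvd j
            have H2 := hdvd pl
            by_cases hj : j = pl <;> simp [sing, hj] <;> omega
          · rwa [show d - (2 * y pl) * 0 = d from by ring]
      · set pA : Fin l := ⟨i-1, lt_of_le_of_lt (Nat.sub_le i 1) hlt⟩ with hpAdef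
        set pB : Fin l := ⟨i, hlt⟩ with hpBdef
        have hAB : pA ≠ pB := Fin.ne_of_val_ne (by simp [hpAdef, hpBdef]; omega)
        rw [simpleRoot_mid i h1 hlt pA pB rfl rfl,
          sref_vec y (sing pA 1 - sing pB 1) d 0 (y pA - y pB)
            (by rw [sum_sing_sub_sq _ _ hAB]; norm_num)
            (by rw [sum_mul_sing_sub, sum_sing_sub_sq _ _ hAB]; ring)]
        refine ⟨_, _, rfl, ?_⟩
        have hy' : (y - (y pA - y pB) • (sing pA 1 - sing pB 1))
            = fun j => y (Equiv.swap pA pB j) := by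
          funext j
          by_cases h1j : j = pA
          · subst h1j
            simp [sing, hAB, Equiv.swap_apply_left]
          · by_cases h2j : j = pB
            · subst h2j
              simp [sing, hAB.symm, Equiv.swap_apply_right]
            · simp [sing, h1j, h2j, Equiv.swap_apply_of_ne_of_ne h1j h2j]
        rw [hy']
        have hsum : ∑ j, y (Equiv.swap pA pB j) * y (Equiv.swap pA pB j)
            = ∑ j, y j * y j := Equiv.sum_comp (Equiv.swap pA pB) (fun k => y k * y k)
        rcases hP with h1 | h2 | ⟨h4, hdvd, hodd⟩
        · exact Or.inl (by rw [hsum, h1])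
        · exact Or.inr (Or.inl (by rw [hsum, h2]))
        · refine Or.inr (Or.inr ⟨by rw [hsum, h4], fun j => hdvd _, ?_⟩)
          rwa [show d - (y pA - y pB) * 0 = d from by ring]

end Part5
section Part6

variable {l : ℕ}

lemma classify1 (y : Fin l → ℤ) (h : ∑ i, y i * y i = 1) :
    ∃ (p : Fin l) (s : ℤ), (s = 1 ∨ s = -1) ∧ y = sing p s := by
  have hex : ∃ p, y p ≠ 0 := by
    by_contra hc
    push_neg at hc
    rw [Finset.sum_eq_zero (fun j _ => by rw [hc j]; ring)] at h
    exact absurd h (by norm_num)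
  obtain ⟨p, hp⟩ := hex
  have hsplit : y p * y p + ∑ j ∈ Finset.univ.erase p, y j * y j = ∑ j, y j * y j :=
    Finset.add_sum_erase Finset.univ (fun j => y j * y j) (Finset.mem_univ p)
  rw [h] at hsplit
  have hpos : 0 < y p * y p := mul_self_pos.mpr hp
  have hrest : 0 ≤ ∑ j ∈ Finset.univ.erase p, y j * y j :=
    Finset.sum_nonneg (fun j _ => mul_self_nonneg _)
  have hyp1 : y p * y p = 1 := by omega
  have hrest0 : ∑ j ∈ Finset.univ.erase p, y j * y j = 0 := by omega
  have hzero : ∀ j, j ≠ p → y j = 0 := by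
    intro j hj
    have := (Finset.sum_eq_zero_iff_of_nonneg (fun k _ => mul_self_nonneg (y k))).mp hrest0 j
      (Finset.mem_erase.mpr ⟨hj, Finset.mem_univ j⟩)
    exact mul_self_eq_zero.mp this
  refine ⟨p, y p, mul_self_eq_one_iff.mp hyp1, ?_⟩
  funext j
  by_cases hj : j = p
  · subst hj; simp [sing]
  · simp [sing, hj, hzero j hj]

lemma classify2 (y : Fin l → ℤ) (h : ∑ i, y i * y i = 2) :
    ∃ (p q : Fin l) (s s' : ℤ), p ≠ q ∧ (s = 1 ∨ s = -1) ∧ (s' = 1 ∨ s' = -1) ∧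
      y = sing p s + sing q s' := by
  have hex : ∃ p, y p ≠ 0 := by
    by_contra hc
    push_neg at hc
    rw [Finset.sum_eq_zero (fun j _ => by rw [hc j]; ring)] at h
    exact absurd h (by norm_num)
  obtain ⟨p, hp⟩ := hex
  have hsplit : y p * y p + ∑ j ∈ Finset.univ.erase p, y j * y j = ∑ j, y j * y j :=
    Finset.add_sum_erase Finset.univ (fun j => y j * y j) (Finset.mem_univ p)
  rw [h] at hsplit
  have hpos : 0 < y p * y p := mul_self_pos.mpr hp
  have hrest : 0 ≤ ∑ j ∈ Finset.univ.erase p, y j * y j :=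
    Finset.sum_nonneg (fun j _ => mul_self_nonneg _)
  have hne2 : y p * y p ≠ 2 := by
    intro h2
    have hb1 : y p ≤ 1 := by nlinarith
    have hb2 : -1 ≤ y p := by nlinarith
    have : y p = -1 ∨ y p = 0 ∨ y p = 1 := by omega
    rcases this with h' | h' | h' <;> rw [h'] at h2 <;> norm_num at h2
  have hyp1 : y p * y p = 1 := by omega
  have hrest1 : ∑ j ∈ Finset.univ.erase p, y j * y j = 1 := by omega
  have hex2 : ∃ q ∈ Finset.univ.erase p, y q ≠ 0 := by
    by_contra hc
    push_neg at hc
    rw [Finset.sum_eq_zero (fun j hj => by rw [hc j hj]; ring)] at hrest1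
    exact absurd hrest1 (by norm_num)
  obtain ⟨q, hqmem, hq⟩ := hex2
  have hsplit2 : y q * y q + ∑ j ∈ (Finset.univ.erase p).erase q, y j * y j
      = ∑ j ∈ Finset.univ.erase p, y j * y j :=
    Finset.add_sum_erase (Finset.univ.erase p) (fun j => y j * y j) hqmem
  rw [hrest1] at hsplit2
  have hposq : 0 < y q * y q := mul_self_pos.mpr hq
  have hrest2 : 0 ≤ ∑ j ∈ (Finset.univ.erase p).erase q, y j * y j :=
    Finset.sum_nonneg (fun j _ => mul_self_nonneg _)
  have hyq1 : y q * y q = 1 := by omega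
  have hrest20 : ∑ j ∈ (Finset.univ.erase p).erase q, y j * y j = 0 := by omega
  have hzero : ∀ j, j ≠ p → j ≠ q → y j = 0 := by
    intro j hjp hjq
    have := (Finset.sum_eq_zero_iff_of_nonneg (fun k _ => mul_self_nonneg (y k))).mp hrest20 j
      (Finset.mem_erase.mpr ⟨hjq, Finset.mem_erase.mpr ⟨hjp, Finset.mem_univ j⟩⟩)
    exact mul_self_eq_zero.mp this
  have hpq : p ≠ q := ((Finset.mem_erase.mp hqmem).1).symm
  refine ⟨p, q, y p, y q, hpq, mul_self_eq_one_iff.mp hyp1, mul_self_eq_one_iff.mp hyq1, ?_⟩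
  funext j
  rw [Pi.add_apply]
  by_cases hjp : j = p
  · subst hjp
    rw [sing_apply_self, sing_apply_ne q j (y q) hpq, add_zero]
  · by_cases hjq : j = q
    · subst hjq
      rw [sing_apply_self, sing_apply_ne p j (y p) hjp, zero_add]
    · rw [sing_apply_ne p j _ hjp, sing_apply_ne q j _ hjq, hzero j hjp hjq]
      norm_num

lemma classify4 (y : Fin l → ℤ) (h : ∑ i, y i * y i = 4) (he : ∀ i, 2 ∣ y i) :
    ∃ (p : Fin l) (s : ℤ), (s = 1 ∨ s = -1) ∧ y = sing p (2*s) := by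
  obtain ⟨z, hz⟩ : ∃ z : Fin l → ℤ, ∀ i, y i = 2 * z i :=
    ⟨fun i => y i / 2, fun i => (Int.mul_ediv_cancel' (he i)).symm⟩
  have h4 : (4:ℤ) * ∑ i, z i * z i = 4 := by
    have hyy : ∑ i, y i * y i = ∑ i, (4:ℤ) * (z i * z i) :=
      Finset.sum_congr rfl fun i _ => by rw [hz i]; ring
    rw [← Finset.mul_sum] at hyy
    rw [← hyy, h]
  have h1 : ∑ i, z i * z i = 1 := by omega
  obtain ⟨p, s, hs, hzs⟩ := classify1 z h1
  refine ⟨p, s, hs, ?_⟩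
  funext j
  rw [hz j, hzs]
  by_cases hj : j = p <;> simp [sing, hj]

end Part6
section Part7

variable {l : ℕ}

lemma vec_add_vec (y z : Fin l → ℤ) (d e : ℤ) :
    vec y d + vec z e = vec (y + z) (d + e) := by
  apply Fhat.ext
  · intro j
    show ((y j : ℤ):ℝ) + ((z j : ℤ):ℝ) = (((y + z) j : ℤ):ℝ)
    push_cast [Pi.add_apply]; ring
  · show ((d:ℤ):ℝ) + ((e:ℤ):ℝ) = ((d + e : ℤ):ℝ); push_cast; ring
  · show (0:ℝ) + 0 = (0:ℝ); ring

lemma single_shape (i : ℕ) (p : Fin l) (hp : (p:ℕ) = i - 1) (s r : ℤ) :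
    (s:ℝ) • eps l i + (r:ℝ) • deltaV l = vec (sing p s) r := by
  rw [eps_eq_vec i p hp, deltaV_eq_vec, intCast_smul_vec, intCast_smul_vec, vec_add_vec]
  rw [show s • sing p 1 + r • (0 : Fin l → ℤ) = sing p s from by
      funext j
      simp only [Pi.add_apply, Pi.smul_apply, smul_eq_mul, Pi.zero_apply, sing]
      split_ifs <;> ring,
    show s * 0 + r * 1 = r from by ring]

lemma pair_shape (i j : ℕ) (p q : Fin l) (hp : (p:ℕ) = i - 1) (hq : (q:ℕ) = j - 1)
    (a b r : ℤ) :
    (a:ℝ) • eps l i + (b:ℝ) • eps l j + (r:ℝ) • deltaV l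
      = vec (sing p a + sing q b) r := by
  rw [eps_eq_vec i p hp, eps_eq_vec j q hq, deltaV_eq_vec, intCast_smul_vec,
    intCast_smul_vec, intCast_smul_vec, vec_add_vec, vec_add_vec]
  rw [show a • sing p 1 + b • sing q 1 + r • (0 : Fin l → ℤ) = sing p a + sing q b from by
      funext k
      simp only [Pi.add_apply, Pi.smul_apply, smul_eq_mul, Pi.zero_apply, sing]
      split_ifs <;> ring,
    show a * 0 + b * 0 + r * 1 = r from by ring]

lemma units_pm (su : ℤˣ) : ((su:ℤ) = 1 ∨ (su:ℤ) = -1) := by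
  rcases Int.units_eq_one_or su with rfl | rfl <;> simp

lemma normS {v : Fhat l} (h : v ∈ DeltaS l) : Ihat v v = 1 := by
  obtain ⟨i, h1, h2, r, su, rfl⟩ := h
  rw [single_shape i ⟨i-1, by omega⟩ rfl, Ihat_vec_vec, sum_sing_sq]
  rcases Int.units_eq_one_or su with rfl | rfl <;> norm_num

lemma normM {v : Fhat l} (h : v ∈ DeltaM l) : Ihat v v = 2 := by
  obtain ⟨i, j, h1, h2, h3, r, su, su', rfl⟩ := h
  have hpq : (⟨i-1, by omega⟩ : Fin l) ≠ ⟨j-1, by omega⟩ := Fin.ne_of_val_ne (by simp; omega)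
  rw [pair_shape i j ⟨i-1, by omega⟩ ⟨j-1, by omega⟩ rfl rfl, Ihat_vec_vec,
    sum_sing_add_sq _ _ hpq]
  rcases Int.units_eq_one_or su with rfl | rfl <;>
    rcases Int.units_eq_one_or su' with rfl | rfl <;> norm_num

lemma normL {v : Fhat l} (h : v ∈ DeltaL l) : Ihat v v = 4 := by
  obtain ⟨i, h1, h2, r, su, rfl⟩ := h
  rw [single_shape i ⟨i-1, by omega⟩ rfl, Ihat_vec_vec, sum_sing_sq]
  rcases Int.units_eq_one_or su with rfl | rfl <;> norm_num

end Part7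

private theorem stmt3_aux (l : ℕ) (hl : 1 ≤ l) :
    {v | IsRealRoot l v} = DeltaS l ∪ DeltaM l ∪ DeltaL l ∧
    Disjoint (DeltaS l) (DeltaM l) ∧ Disjoint (DeltaS l) (DeltaL l) ∧
    Disjoint (DeltaM l) (DeltaL l) := by
  have hl0 : 0 < l := hl
  refine ⟨?_, ?_, ?_, ?_⟩
  · ext v
    simp only [Set.mem_setOf_eq, Set.mem_union]
    constructor
    · intro hv
      obtain ⟨y, d, rfl, hP⟩ := good_of_real hl0 hv
      rcases hP with h1 | h2 | ⟨h4, hdvd, hodd⟩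
      · obtain ⟨p, s, hs, rfl⟩ := classify1 y h1
        left; left
        have hsu : (((if s = 1 then 1 else -1 : ℤˣ)) : ℤ) = s := by
          rcases hs with rfl | rfl <;> norm_num
        refine ⟨(p:ℕ)+1, by omega, by have := p.isLt; omega, d,
          if s = 1 then 1 else -1, ?_⟩
        rw [single_shape ((p:ℕ)+1) p (by omega), hsu]
      · obtain ⟨p, q, s, s', hpq, hs, hs', rfl⟩ := classify2 y h2
        left; right
        rcases lt_or_gt_of_ne hpq with hlt | hgt
        · have hsu : (((if s = 1 then 1 else -1 : ℤˣ)) : ℤ) = s := by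
            rcases hs with rfl | rfl <;> norm_num
          have hsu' : (((if s' = 1 then 1 else -1 : ℤˣ)) : ℤ) = s' := by
            rcases hs' with rfl | rfl <;> norm_num
          have hv := Fin.lt_def.mp hlt
          refine ⟨(p:ℕ)+1, (q:ℕ)+1, by omega, by omega, by have := q.isLt; omega, d,
            if s = 1 then 1 else -1, if s' = 1 then 1 else -1, ?_⟩
          rw [pair_shape ((p:ℕ)+1) ((q:ℕ)+1) p q (by omega) (by omega), hsu, hsu']
        · have hsu : (((if s' = 1 then 1 else -1 : ℤˣ)) : ℤ) = s' := by
            rcases hs' with rfl | rfl <;> norm_num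
          have hsu' : (((if s = 1 then 1 else -1 : ℤˣ)) : ℤ) = s := by
            rcases hs with rfl | rfl <;> norm_num
          have hv := Fin.lt_def.mp hgt
          refine ⟨(q:ℕ)+1, (p:ℕ)+1, by omega, by omega, by have := p.isLt; omega, d,
            if s' = 1 then 1 else -1, if s = 1 then 1 else -1, ?_⟩
          rw [pair_shape ((q:ℕ)+1) ((p:ℕ)+1) q p (by omega) (by omega), hsu, hsu',
            add_comm (sing p s) (sing q s')]
      · obtain ⟨p, s, hs, rfl⟩ := classify4 y h4 hdvd
        obtain ⟨r, hr⟩ := hodd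
        right
        have hsu : (((if s = 1 then 1 else -1 : ℤˣ)) : ℤ) = s := by
          rcases hs with rfl | rfl <;> norm_num
        refine ⟨(p:ℕ)+1, by omega, by have := p.isLt; omega, r,
          if s = 1 then 1 else -1, ?_⟩
        rw [single_shape ((p:ℕ)+1) p (by omega), hsu, hr]
    · intro h
      rcases h with (hS | hM) | hL
      · obtain ⟨i, h1, h2, r, su, rfl⟩ := hS
        rw [single_shape i ⟨i-1, by omega⟩ rfl]
        exact rootS hl0 _ (su:ℤ) (units_pm su) r
      · obtain ⟨i, j, h1, h2, h3, r, su, su', rfl⟩ := hM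
        rw [pair_shape i j ⟨i-1, by omega⟩ ⟨j-1, by omega⟩ rfl rfl]
        exact rootM hl0 _ _ (Fin.mk_lt_mk.mpr (by omega)) _ _ (units_pm su) (units_pm su') r
      · obtain ⟨i, h1, h2, r, su, rfl⟩ := hL
        rw [single_shape i ⟨i-1, by omega⟩ rfl]
        exact rootL hl0 _ (su:ℤ) (units_pm su) r
  · rw [Set.disjoint_left]
    intro v hS hM
    have := normS hS; have := normM hM; linarith
  · rw [Set.disjoint_left]
    intro v hS hL
    have := normS hS; have := normL hL; linarith
  · rw [Set.disjoint_left]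
    intro v hM hL
    have := normM hM; have := normL hL; linarith
/-- `Δ^{re} = Δ_s ⊔ Δ_m ⊔ Δ_l` (a disjoint union). -/
theorem stmt3 (l : ℕ) (hl : 1 ≤ l) :
    {v | IsRealRoot l v} = DeltaS l ∪ DeltaM l ∪ DeltaL l ∧
    Disjoint (DeltaS l) (DeltaM l) ∧ Disjoint (DeltaS l) (DeltaL l) ∧
    Disjoint (DeltaM l) (DeltaL l) := by
  exact stmt3_aux l hl
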